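/- Let d ≥ 2 and fix z ∈ S^{d−1}. Let σ̄ denote the uniform probability measure on S^{d−1}. Then the limit as t → 0+ of t^{−(d−1)/2} · σ̄({o ∈ S^{d−1} : ‖z − o‖₂² ≤ t}) equals V_{d−1}/A_{d−1}, where V_{d−1} = π^{(d−1)/2}/Γ(1 + (d−1)/2) is the volume of the unit ball in ℝ^{d−1} and A_{d−1} = 2π^{d/2}/Γ(d/2) is the surface area of S^{d−1}. -/

import Mathlib

open MeasureTheory Metric Set Filter


/-- The uniform (rotation-invariant) probability measure on the unit sphere, characterized as a
probability measure supported on the sphere and invariant under all linear isometries. -/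
def IsUniformOnSphere {ι : Type*} [Fintype ι] (μ : Measure (EuclideanSpace ℝ ι)) : Prop :=
  IsProbabilityMeasure μ ∧
  μ (Metric.sphere (0 : EuclideanSpace ℝ ι) 1)ᶜ = 0 ∧
  ∀ R : EuclideanSpace ℝ ι ≃ₗᵢ[ℝ] EuclideanSpace ℝ ι, Measure.map R μ = μ

/-- Volume of the unit ball in `ℝ^n`. -/
noncomputable def unitBallVol (n : ℕ) : ℝ := Real.pi ^ ((n : ℝ) / 2) / Real.Gamma (1 + (n : ℝ) / 2)

/-- Surface area of the unit sphere `S^{d-1} ⊂ ℝ^d`. -/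
noncomputable def sphereArea (d : ℕ) : ℝ := 2 * Real.pi ^ ((d : ℝ) / 2) / Real.Gamma ((d : ℝ) / 2)

noncomputable section
namespace S18

variable {d : ℕ}

/-- normalization map -/
def nrm (d : ℕ) (x : EuclideanSpace ℝ (Fin d)) : EuclideanSpace ℝ (Fin d) := ‖x‖⁻¹ • x

lemma measurable_nrm : Measurable (nrm d) := (measurable_norm.inv).smul measurable_id

/-- concrete uniform measure on the sphere -/
def uniS (d : ℕ) : Measure (EuclideanSpace ℝ (Fin d)) :=
  (volume (ball (0 : EuclideanSpace ℝ (Fin d)) 1))⁻¹ •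
    Measure.map (nrm d) (volume.restrict (ball (0 : EuclideanSpace ℝ (Fin d)) 1))

lemma uniS_apply {A : Set (EuclideanSpace ℝ (Fin d))} (hA : MeasurableSet A) :
    uniS d A = (volume (ball (0 : EuclideanSpace ℝ (Fin d)) 1))⁻¹ *
      volume (nrm d ⁻¹' A ∩ ball (0 : EuclideanSpace ℝ (Fin d)) 1) := by
  rw [uniS, Measure.smul_apply, Measure.map_apply measurable_nrm hA,
    Measure.restrict_apply (measurable_nrm hA)]
  rfl

lemma ball_meas_ne_zero (d : ℕ) :
    volume (ball (0 : EuclideanSpace ℝ (Fin d)) 1) ≠ 0 := (measure_ball_pos _ _ one_pos).ne'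

lemma ball_meas_ne_top (d : ℕ) :
    volume (ball (0 : EuclideanSpace ℝ (Fin d)) 1) ≠ ⊤ := measure_ball_lt_top.ne

lemma uniS_isUniform (d : ℕ) (hd : d ≠ 0) : IsUniformOnSphere (uniS d) := by
  haveI : NeZero d := ⟨hd⟩
  refine ⟨⟨?_⟩, ?_, ?_⟩
  · rw [uniS_apply MeasurableSet.univ]
    simp [ENNReal.inv_mul_cancel (ball_meas_ne_zero d) (ball_meas_ne_top d)]
  · rw [uniS_apply isClosed_sphere.measurableSet.compl]
    have h : nrm d ⁻¹' (sphere (0 : EuclideanSpace ℝ (Fin d)) 1)ᶜ ∩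
        ball (0 : EuclideanSpace ℝ (Fin d)) 1 ⊆ {0} := by
      intro x hx
      by_contra hx0
      apply hx.1
      have hxn : ‖x‖ ≠ 0 := by simpa using hx0
      simp only [mem_sphere_zero_iff_norm, nrm, norm_smul, norm_inv, norm_norm]
      field_simp
    rw [measure_mono_null h (measure_singleton 0), mul_zero]
  · intro R
    have hR : MeasurePreserving (⇑R) volume volume := R.measurePreserving
    have hcomm : (⇑R) ∘ nrm d = nrm d ∘ (⇑R) := by
      funext x
      simp [nrm, R.map_smul, R.norm_map, Function.comp]
    have hpre : (⇑R) ⁻¹' (ball (0 : EuclideanSpace ℝ (Fin d)) 1) = ball 0 1 := by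
      ext x
      simp [mem_ball_zero_iff, R.norm_map]
    rw [uniS, Measure.map_smul]
    congr 1
    rw [Measure.map_map R.continuous.measurable measurable_nrm, hcomm,
      ← Measure.map_map measurable_nrm R.continuous.measurable]
    congr 1
    have := (hR.restrict_preimage measurableSet_ball
      (s := ball (0 : EuclideanSpace ℝ (Fin d)) 1)).map_eq
    rwa [hpre] at this


variable {z x : EuclideanSpace ℝ (Fin d)} {s : ℝ}

/-- spherical cap -/
def cap (d : ℕ) (z : EuclideanSpace ℝ (Fin d)) (s : ℝ) : Set (EuclideanSpace ℝ (Fin d)) :=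
  {o | ‖o‖ = 1 ∧ s ≤ inner ℝ z o}

lemma isClosed_cap : IsClosed (cap d z s) := by
  have h1 : IsClosed {o : EuclideanSpace ℝ (Fin d) | ‖o‖ = 1} :=
    isClosed_eq continuous_norm continuous_const
  have h2 : IsClosed {o : EuclideanSpace ℝ (Fin d) | s ≤ inner ℝ z o} :=
    isClosed_le continuous_const (Continuous.inner continuous_const continuous_id')
  exact h1.inter h2
lemma measurableSet_cap : MeasurableSet (cap d z s) := isClosed_cap.measurableSet

lemma cap_reflect (μ : Measure (EuclideanSpace ℝ (Fin d)))
    (hinv : ∀ R : EuclideanSpace ℝ (Fin d) ≃ₗᵢ[ℝ] EuclideanSpace ℝ (Fin d),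
      Measure.map R μ = μ)
    (hx : ‖x‖ = 1) (hz : ‖z‖ = 1) (s : ℝ) : μ (cap d x s) = μ (cap d z s) := by
  set R := Submodule.reflection (ℝ ∙ (z - x))ᗮ with hR
  have hRz : R z = x := Submodule.reflection_sub (by rw [hz, hx])
  have hinner : ∀ o, (inner ℝ z (R o) : ℝ) = inner ℝ x o := by
    intro o
    calc (inner ℝ z (R o) : ℝ) = inner ℝ (R z) (R (R o)) := (R.inner_map_map z (R o)).symm
    _ = inner ℝ x o := by rw [hRz, Submodule.reflection_reflection]
  have hpre : (⇑R) ⁻¹' (cap d z s) = cap d x s := by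
    ext o
    simp only [cap, Set.mem_preimage, Set.mem_setOf_eq, R.norm_map, hinner o]
  rw [← hpre, ← Measure.map_apply R.continuous.measurable measurableSet_cap, hinv R]

lemma cap_unique (μ ν : Measure (EuclideanSpace ℝ (Fin d)))
    (hμ : IsUniformOnSphere μ) (hν : IsUniformOnSphere ν) (hz : ‖z‖ = 1) (s : ℝ) :
    μ (cap d z s) = ν (cap d z s) := by
  haveI := hμ.1
  haveI := hν.1
  set M : Set (EuclideanSpace ℝ (Fin d) × EuclideanSpace ℝ (Fin d)) :=
    {p | ‖p.1‖ = 1 ∧ ‖p.2‖ = 1 ∧ s ≤ inner ℝ p.1 p.2} with hMdef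
  have hMc : IsClosed M := by
    have h1 : IsClosed {p : EuclideanSpace ℝ (Fin d) × EuclideanSpace ℝ (Fin d) | ‖p.1‖ = 1} :=
      isClosed_eq (continuous_norm.comp continuous_fst) continuous_const
    have h2 : IsClosed {p : EuclideanSpace ℝ (Fin d) × EuclideanSpace ℝ (Fin d) | ‖p.2‖ = 1} :=
      isClosed_eq (continuous_norm.comp continuous_snd) continuous_const
    have h3 : IsClosed {p : EuclideanSpace ℝ (Fin d) × EuclideanSpace ℝ (Fin d) |
        s ≤ inner ℝ p.1 p.2} :=
      isClosed_le continuous_const (Continuous.inner continuous_fst continuous_snd)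
    exact h1.inter (h2.inter h3)
  have hM : MeasurableSet M := hMc.measurableSet
  have hae_ν : ∀ᵐ x ∂ν, ‖x‖ = 1 := by
    rw [ae_iff]
    convert hν.2.1 using 2
    ext x
    simp [mem_sphere_zero_iff_norm]
  have hae_μ : ∀ᵐ o ∂μ, ‖o‖ = 1 := by
    rw [ae_iff]
    convert hμ.2.1 using 2
    ext x
    simp [mem_sphere_zero_iff_norm]
  have key : (ν.prod μ) M = μ (cap d z s) := by
    rw [Measure.prod_apply hM]
    rw [lintegral_congr_ae (g := fun _ => μ (cap d z s)) ?_, lintegral_const, measure_univ,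
      mul_one]
    filter_upwards [hae_ν] with x hx
    have hsec : Prod.mk x ⁻¹' M = cap d x s := by
      ext o
      simp only [hMdef, Set.mem_preimage, Set.mem_setOf_eq, cap, hx, true_and]
    rw [hsec]
    exact cap_reflect μ hμ.2.2 hx hz s
  have key2 : (ν.prod μ) M = ν (cap d z s) := by
    rw [Measure.prod_apply_symm hM]
    rw [lintegral_congr_ae (g := fun _ => ν (cap d z s)) ?_, lintegral_const, measure_univ,
      mul_one]
    filter_upwards [hae_μ] with o ho
    have hsec : (fun x => (x, o)) ⁻¹' M = cap d o s := by
      ext x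
      simp only [hMdef, Set.mem_preimage, Set.mem_setOf_eq, cap, ho, true_and, and_true]
      rw [real_inner_comm]
    rw [hsec]
    exact cap_reflect ν hν.2.2 ho hz s
  rw [← key, key2]

/-- truncated cone -/
def coneK (n : ℕ) (A c : ℝ) : Set (EuclideanSpace ℝ (Fin (n + 1))) :=
  {x | 0 ≤ x 0 ∧ x 0 < A ∧ ∑ i : Fin n, (x i.succ) ^ 2 ≤ (c * x 0) ^ 2}

lemma volume_coneK (n : ℕ) {A c : ℝ} (hA : 0 ≤ A) (hc : 0 ≤ c) :
    volume (coneK n A c) =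
      ENNReal.ofReal (c ^ n * (A ^ (n + 1) / (n + 1))) *
        volume (ball (0 : EuclideanSpace ℝ (Fin n)) 1) := by
  classical
  set Bn := volume (ball (0 : EuclideanSpace ℝ (Fin n)) 1) with hBn
  set T : Set (ℝ × (Fin n → ℝ)) :=
    {p | 0 ≤ p.1 ∧ p.1 < A ∧ ∑ i : Fin n, (p.2 i) ^ 2 ≤ (c * p.1) ^ 2} with hT
  have hTmeas : MeasurableSet T := by
    have h1 : Measurable fun p : ℝ × (Fin n → ℝ) => ∑ i : Fin n, (p.2 i) ^ 2 :=
      Finset.measurable_sum _ fun i _ =>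
        ((measurable_pi_apply i).comp measurable_snd).pow_const 2
    have h2 : Measurable fun p : ℝ × (Fin n → ℝ) => (c * p.1) ^ 2 :=
      (measurable_fst.const_mul c).pow_const 2
    exact (measurableSet_le measurable_const measurable_fst).inter
      ((measurableSet_lt measurable_fst measurable_const).inter (measurableSet_le h1 h2))
  have hpre : coneK n A c =
      (MeasurableEquiv.piFinSuccAbove (fun _ : Fin (n + 1) => ℝ) 0) ∘
        (MeasurableEquiv.toLp 2 (Fin (n + 1) → ℝ)).symm ⁻¹' T := by
    ext x
    simp only [coneK, Set.mem_preimage, Function.comp_apply, hT, Set.mem_setOf_eq,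
      MeasurableEquiv.piFinSuccAbove_apply, Fin.succAbove_zero]
    rfl
  have hmp : MeasurePreserving
      ((MeasurableEquiv.piFinSuccAbove (fun _ : Fin (n + 1) => ℝ) 0) ∘
        (MeasurableEquiv.toLp 2 (Fin (n + 1) → ℝ)).symm) volume volume :=
    (volume_preserving_piFinSuccAbove (fun _ : Fin (n + 1) => ℝ) 0).comp
      (EuclideanSpace.volume_preserving_symm_measurableEquiv_toLp (Fin (n + 1)))
  rw [hpre, hmp.measure_preimage hTmeas.nullMeasurableSet]
  have hvol : (volume : Measure (ℝ × (Fin n → ℝ))) = (volume : Measure ℝ).prod volume :=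
    Measure.volume_eq_prod ℝ (Fin n → ℝ)
  rw [hvol, Measure.prod_apply hTmeas]
  have hslice : ∀ a : ℝ, volume (Prod.mk a ⁻¹' T) =
      (Ico (0:ℝ) A).indicator (fun a => ENNReal.ofReal ((c * a) ^ n) * Bn) a := by
    intro a
    by_cases ha : a ∈ Ico (0:ℝ) A
    · have hsl : Prod.mk a ⁻¹' T = {y : Fin n → ℝ | ∑ i : Fin n, (y i) ^ 2 ≤ (c * a) ^ 2} := by
        ext y
        simp only [hT, Set.mem_preimage, Set.mem_setOf_eq, ha.1, ha.2, true_and]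
      have hball : (MeasurableEquiv.toLp 2 (Fin n → ℝ)).symm ⁻¹'
          {y : Fin n → ℝ | ∑ i : Fin n, (y i) ^ 2 ≤ (c * a) ^ 2} =
          closedBall (0 : EuclideanSpace ℝ (Fin n)) (c * a) := by
        ext v
        have hca : 0 ≤ c * a := mul_nonneg hc ha.1
        have hnorm : ‖v‖ = Real.sqrt (∑ i : Fin n, (v i) ^ 2) := by
          rw [EuclideanSpace.norm_eq]
          simp [Real.norm_eq_abs, sq_abs]
        simp only [Set.mem_preimage, Set.mem_setOf_eq, mem_closedBall_zero_iff]
        constructor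
        · intro h
          rw [hnorm]
          calc Real.sqrt (∑ i : Fin n, (v i) ^ 2) ≤ Real.sqrt ((c * a) ^ 2) :=
              Real.sqrt_le_sqrt (by exact_mod_cast h)
          _ = c * a := Real.sqrt_sq hca
        · intro h
          have h2 : ‖v‖ ^ 2 ≤ (c * a) ^ 2 := by
            have := pow_le_pow_left₀ (norm_nonneg v) h 2
            exact this
          rw [hnorm, Real.sq_sqrt (Finset.sum_nonneg fun i _ => sq_nonneg _)] at h2
          exact h2
      rw [hsl, ← (EuclideanSpace.volume_preserving_symm_measurableEquiv_toLp (Fin n)).measure_preimage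
        (by
          have h1 : Measurable fun y : Fin n → ℝ => ∑ i : Fin n, (y i) ^ 2 :=
            Finset.measurable_sum _ fun i _ => (measurable_pi_apply i).pow_const 2
          exact (measurableSet_le h1 measurable_const).nullMeasurableSet), hball,
        Measure.addHaar_closedBall _ _ (mul_nonneg hc ha.1), Set.indicator_of_mem ha,
        finrank_euclideanSpace_fin]
    · have hsl : Prod.mk a ⁻¹' T = ∅ := by
        ext y
        simp only [hT, Set.mem_preimage, Set.mem_setOf_eq, Set.mem_empty_iff_false, iff_false]
        rintro ⟨h1, h2, -⟩
        exact ha ⟨h1, h2⟩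
      rw [hsl, measure_empty, Set.indicator_of_notMem ha]
  calc ∫⁻ a, volume (Prod.mk a ⁻¹' T) ∂volume
      = ∫⁻ a, (Ico (0:ℝ) A).indicator (fun a => ENNReal.ofReal ((c * a) ^ n) * Bn) a ∂volume :=
        lintegral_congr hslice
    _ = ∫⁻ a in Ico (0:ℝ) A, ENNReal.ofReal ((c * a) ^ n) * Bn ∂volume := by
        rw [lintegral_indicator measurableSet_Ico]
    _ = (∫⁻ a in Ico (0:ℝ) A, ENNReal.ofReal ((c * a) ^ n) ∂volume) * Bn := by
        rw [lintegral_mul_const]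
        exact (ENNReal.measurable_ofReal.comp ((measurable_id.const_mul c).pow_const n))
    _ = ENNReal.ofReal (c ^ n * (A ^ (n + 1) / (n + 1))) * Bn := by
        congr 1
        have hcong : ∫⁻ a in Ico (0:ℝ) A, ENNReal.ofReal ((c * a) ^ n) ∂volume =
            ∫⁻ a in Ico (0:ℝ) A, ENNReal.ofReal (c ^ n) * ENNReal.ofReal (a ^ n) ∂volume := by
          refine setLIntegral_congr_fun measurableSet_Ico (fun a ha => ?_)
          rw [mul_pow, ENNReal.ofReal_mul (pow_nonneg hc n)]
        have hmeas : Measurable fun a : ℝ => ENNReal.ofReal (a ^ n) := by fun_prop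
        rw [hcong, lintegral_const_mul _ hmeas]
        have hint : IntegrableOn (fun a : ℝ => a ^ n) (Ico 0 A) volume :=
          (continuous_pow n).integrableOn_Icc.mono_set Ico_subset_Icc_self
        have hpos : 0 ≤ᵐ[volume.restrict (Ico (0:ℝ) A)] fun a : ℝ => a ^ n :=
          (ae_restrict_iff' measurableSet_Ico).2 (ae_of_all _ fun a ha => pow_nonneg ha.1 n)
        rw [← ofReal_integral_eq_lintegral_ofReal hint hpos]
        rw [← ENNReal.ofReal_mul (pow_nonneg hc n)]
        congr 1
        rw [integral_Ico_eq_integral_Ioo, ← integral_Ioc_eq_integral_Ioo,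
          ← intervalIntegral.integral_of_le hA, integral_pow]
        simp

variable {n : ℕ}

/-- solid spherical sector -/
def sector (n : ℕ) (s : ℝ) : Set (EuclideanSpace ℝ (Fin (n + 1))) :=
  {x | s * ‖x‖ ≤ x 0 ∧ ‖x‖ < 1}

def e0 (n : ℕ) : EuclideanSpace ℝ (Fin (n + 1)) := EuclideanSpace.single 0 1

lemma norm_e0 : ‖e0 n‖ = 1 := by
  simp [e0, EuclideanSpace.norm_single]

lemma inner_e0 (x : EuclideanSpace ℝ (Fin (n + 1))) : (inner ℝ (e0 n) x : ℝ) = x 0 := by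
  simp [e0, EuclideanSpace.inner_single_left]

lemma norm_sq_split (x : EuclideanSpace ℝ (Fin (n + 1))) :
    ‖x‖ ^ 2 = x 0 ^ 2 + ∑ i : Fin n, (x i.succ) ^ 2 := by
  rw [EuclideanSpace.norm_eq, Real.sq_sqrt (Finset.sum_nonneg fun i _ => sq_nonneg _)]
  simp [Fin.sum_univ_succ, Real.norm_eq_abs, sq_abs]

lemma uniS_cap {s : ℝ} (hs : 0 < s) :
    uniS (n + 1) (cap (n + 1) (e0 n) s) =
      (volume (ball (0 : EuclideanSpace ℝ (Fin (n + 1))) 1))⁻¹ * volume (sector n s) := by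
  rw [uniS_apply measurableSet_cap]
  congr 1
  have hset : nrm (n + 1) ⁻¹' (cap (n + 1) (e0 n) s) ∩
      ball (0 : EuclideanSpace ℝ (Fin (n + 1))) 1 = sector n s \ {0} := by
    ext x
    by_cases hx : x = (0 : EuclideanSpace ℝ (Fin (n + 1)))
    · subst hx
      simp only [Set.mem_inter_iff, Set.mem_preimage, nrm, norm_zero, smul_zero, cap,
        Set.mem_setOf_eq, Set.mem_diff, Set.mem_singleton_iff, not_true]
      simp
    · have hxn : (0:ℝ) < ‖x‖ := norm_pos_iff.2 hx
      simp only [Set.mem_inter_iff, Set.mem_preimage, cap, Set.mem_setOf_eq, nrm,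
        mem_ball_zero_iff, Set.mem_diff, Set.mem_singleton_iff, hx, not_false_iff, and_true,
        sector]
      have h1 : ‖‖x‖⁻¹ • x‖ = 1 := by
        rw [norm_smul, norm_inv, norm_norm, inv_mul_cancel₀ hxn.ne']
      have h2 : (inner ℝ (e0 n) (‖x‖⁻¹ • x) : ℝ) = ‖x‖⁻¹ * x 0 := by
        rw [real_inner_smul_right, inner_e0]
      rw [h1, h2]
      constructor
      · rintro ⟨⟨-, h⟩, hb⟩
        refine ⟨?_, hb⟩
        calc s * ‖x‖ ≤ (‖x‖⁻¹ * x 0) * ‖x‖ := by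
              exact mul_le_mul_of_nonneg_right h hxn.le
        _ = x 0 := by field_simp
      · rintro ⟨h, hb⟩
        refine ⟨⟨rfl, ?_⟩, hb⟩
        rw [le_inv_mul_iff₀ hxn, mul_comm]
        exact h
  rw [hset]
  have : volume (sector n s \ {0}) = volume (sector n s) := by
    apply measure_diff_null
    exact measure_singleton 0
  rw [this]

lemma cVal {s : ℝ} (hs0 : 0 < s) (hs1 : s < 1) :
    (Real.sqrt (1 - s ^ 2) / s) ^ 2 * s ^ 2 = 1 - s ^ 2 := by
  rw [div_pow, Real.sq_sqrt (by nlinarith)]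
  field_simp

lemma coneK_subset_sector {s : ℝ} (hs0 : 0 < s) (hs1 : s < 1) :
    coneK n s (Real.sqrt (1 - s ^ 2) / s) ⊆ sector n s := by
  set c := Real.sqrt (1 - s ^ 2) / s with hc
  have hc2 : c ^ 2 * s ^ 2 = 1 - s ^ 2 := cVal hs0 hs1
  rintro x ⟨h0, hA, hsum⟩
  have hns : ‖x‖ ^ 2 = x 0 ^ 2 + ∑ i : Fin n, (x i.succ) ^ 2 := norm_sq_split x
  have hn2 : s ^ 2 * ‖x‖ ^ 2 ≤ x 0 ^ 2 := by nlinarith [sq_nonneg (x 0)]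
  have hnx : 0 ≤ ‖x‖ := norm_nonneg x
  constructor
  · nlinarith [sq_nonneg (s * ‖x‖ + x 0), mul_nonneg hs0.le hnx]
  · have hx0s : x 0 ^ 2 < s ^ 2 := by nlinarith
    have hlt : ‖x‖ ^ 2 < 1 := by nlinarith [pow_pos hs0 2]
    nlinarith [sq_nonneg (‖x‖ - 1)]

lemma sector_subset_coneK {s : ℝ} (hs0 : 0 < s) (hs1 : s < 1) :
    sector n s ⊆ coneK n 1 (Real.sqrt (1 - s ^ 2) / s) := by
  set c := Real.sqrt (1 - s ^ 2) / s with hc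
  have hc2 : c ^ 2 * s ^ 2 = 1 - s ^ 2 := cVal hs0 hs1
  rintro x ⟨h1, h2⟩
  have hns : ‖x‖ ^ 2 = x 0 ^ 2 + ∑ i : Fin n, (x i.succ) ^ 2 := norm_sq_split x
  have hnx : 0 ≤ ‖x‖ := norm_nonneg x
  have h0 : 0 ≤ x 0 := le_trans (by positivity) h1
  have hsq : s ^ 2 * ‖x‖ ^ 2 ≤ x 0 ^ 2 := by
    nlinarith [mul_self_le_mul_self (mul_nonneg hs0.le hnx) h1]
  have hsumnn : (0:ℝ) ≤ ∑ i : Fin n, (x i.succ) ^ 2 :=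
    Finset.sum_nonneg fun i _ => sq_nonneg _
  refine ⟨h0, ?_, ?_⟩
  · nlinarith [sq_nonneg (x 0 + ‖x‖)]
  · rw [mul_pow]
    have h3 : s ^ 2 * (∑ i : Fin n, (x i.succ) ^ 2) ≤ s ^ 2 * (c ^ 2 * x 0 ^ 2) := by
      nlinarith
    exact le_of_mul_le_mul_left h3 (pow_pos hs0 2)

lemma volume_ball_toReal (n : ℕ) (hn : n ≠ 0) :
    (volume (ball (0 : EuclideanSpace ℝ (Fin n)) 1)).toReal = unitBallVol n := by
  haveI : Nonempty (Fin n) := ⟨⟨0, Nat.pos_of_ne_zero hn⟩⟩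
  rw [EuclideanSpace.volume_ball]
  rw [ENNReal.ofReal_one, one_pow, one_mul, ENNReal.toReal_ofReal (by positivity)]
  rw [unitBallVol, Fintype.card_fin]
  have hpi : Real.sqrt Real.pi ^ n = Real.pi ^ ((n : ℝ) / 2) := by
    rw [Real.sqrt_eq_rpow, ← Real.rpow_natCast (Real.pi ^ ((1:ℝ)/2)) n,
      ← Real.rpow_mul Real.pi_pos.le]
    rw [mul_comm, mul_one_div]
  rw [hpi, add_comm ((n:ℝ)/2) 1]

lemma sphereArea_eq (d : ℕ) (hd : d ≠ 0) : sphereArea d = d * unitBallVol d := by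
  have hd0 : (0:ℝ) < d := Nat.cast_pos.2 (Nat.pos_of_ne_zero hd)
  rw [sphereArea, unitBallVol, add_comm 1 ((d:ℝ)/2),
    Real.Gamma_add_one (div_pos hd0 two_pos).ne']
  have hg : Real.Gamma ((d:ℝ)/2) ≠ 0 := (Real.Gamma_pos_of_pos (div_pos hd0 two_pos)).ne'
  field_simp

end S18

theorem stmt18 (d : ℕ) (hd : 2 ≤ d)
    (μ : Measure (EuclideanSpace ℝ (Fin d))) (hμ : IsUniformOnSphere μ)
    (z : EuclideanSpace ℝ (Fin d)) (hz : ‖z‖ = 1) :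
    Filter.Tendsto
      (fun t : ℝ =>
        t ^ (-(((d : ℝ) - 1) / 2)) *
          (μ {o : EuclideanSpace ℝ (Fin d) | ‖z - o‖ ^ 2 ≤ t}).toReal)
      (nhdsWithin 0 (Set.Ioi 0))
      (nhds (unitBallVol (d - 1) / sphereArea d)) := by
  obtain ⟨n, rfl⟩ : ∃ n, d = n + 1 := ⟨d - 1, by omega⟩
  have hn : n ≠ 0 := by omega
  simp only [Nat.cast_add, Nat.cast_one, add_sub_cancel_right, Nat.add_sub_cancel]
  set bn := (volume (ball (0 : EuclideanSpace ℝ (Fin n)) 1)).toReal with hbndef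
  set vd := (volume (ball (0 : EuclideanSpace ℝ (Fin (n + 1))) 1)).toReal with hvddef
  have hbn : bn = unitBallVol n := S18.volume_ball_toReal n hn
  have hvd : vd = unitBallVol (n + 1) := S18.volume_ball_toReal (n + 1) (by omega)
  have hvd0 : 0 < vd :=
    ENNReal.toReal_pos (S18.ball_meas_ne_zero _) (S18.ball_meas_ne_top _)
  have hbn0 : 0 ≤ bn := ENNReal.toReal_nonneg
  have hconst : unitBallVol n / sphereArea (n + 1) = bn / (((n : ℝ) + 1) * vd) := by
    rw [hbn, hvd, S18.sphereArea_eq (n + 1) (by omega)]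
    push_cast
    ring_nf
  rw [hconst]
  -- limits of the bounding functions
  have h14 : Filter.Tendsto (fun t : ℝ => 1 - t / 4) (nhds 0) (nhds 1) := by
    have hc : Continuous fun t : ℝ => 1 - t / 4 := by continuity
    simpa using hc.tendsto 0
  have h12 : Filter.Tendsto (fun t : ℝ => 1 - t / 2) (nhds 0) (nhds 1) := by
    have hc : Continuous fun t : ℝ => 1 - t / 2 := by continuity
    simpa using hc.tendsto 0
  have hsq : Filter.Tendsto (fun t : ℝ => Real.sqrt (1 - t / 4)) (nhds 0) (nhds 1) := by
    have := (Real.continuous_sqrt.tendsto 1).comp h14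
    rw [Real.sqrt_one] at this
    exact this
  have hg : Filter.Tendsto (fun t : ℝ => (Real.sqrt (1 - t / 4) / (1 - t / 2)) ^ n)
      (nhds 0) (nhds 1) := by
    have := (hsq.div h12 one_ne_zero).pow n
    simpa using this
  have hFlo : Filter.Tendsto
      (fun t : ℝ => (Real.sqrt (1 - t / 4) / (1 - t / 2)) ^ n *
        ((1 - t / 2) ^ (n + 1) / ((n : ℝ) + 1)) * bn / vd)
      (nhdsWithin 0 (Set.Ioi 0)) (nhds (bn / (((n : ℝ) + 1) * vd))) := by
    have h := ((hg.mul ((h12.pow (n + 1)).div_const ((n : ℝ) + 1))).mul_const bn).div_const vd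
    have hval : 1 * ((1:ℝ) ^ (n + 1) / ((n : ℝ) + 1)) * bn / vd =
        bn / (((n : ℝ) + 1) * vd) := by
      rw [one_pow, one_mul]
      field_simp
    rw [hval] at h
    exact h.mono_left nhdsWithin_le_nhds
  have hFhi : Filter.Tendsto
      (fun t : ℝ => (Real.sqrt (1 - t / 4) / (1 - t / 2)) ^ n *
        ((1:ℝ) / ((n : ℝ) + 1)) * bn / vd)
      (nhdsWithin 0 (Set.Ioi 0)) (nhds (bn / (((n : ℝ) + 1) * vd))) := by
    have h := ((hg.mul_const ((1:ℝ) / ((n : ℝ) + 1))).mul_const bn).div_const vd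
    have hval : 1 * ((1:ℝ) / ((n : ℝ) + 1)) * bn / vd = bn / (((n : ℝ) + 1) * vd) := by
      field_simp
    rw [hval] at h
    exact h.mono_left nhdsWithin_le_nhds
  refine tendsto_of_tendsto_of_tendsto_of_le_of_le' hFlo hFhi ?_ ?_ <;>
    (filter_upwards [Ioo_mem_nhdsGT_of_mem (Set.left_mem_Ico.2 one_pos)] with t ht) <;>
    (obtain ⟨ht0, ht1⟩ := ht;
     have hs0 : 0 < 1 - t / 2 := by linarith;
     have hs1 : 1 - t / 2 < 1 := by linarith;
     have hc0 : 0 ≤ Real.sqrt (1 - (1 - t / 2) ^ 2) / (1 - t / 2) :=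
       div_nonneg (Real.sqrt_nonneg _) hs0.le;
     have hμcap : μ {o : EuclideanSpace ℝ (Fin (n + 1)) | ‖z - o‖ ^ 2 ≤ t} =
         (volume (ball (0 : EuclideanSpace ℝ (Fin (n + 1))) 1))⁻¹ *
           volume (S18.sector n (1 - t / 2)) := by
       have h1 : {o : EuclideanSpace ℝ (Fin (n + 1)) | ‖z - o‖ ^ 2 ≤ t} ∩
           sphere (0 : EuclideanSpace ℝ (Fin (n + 1))) 1 = S18.cap (n + 1) z (1 - t / 2) := by
         ext o
         simp only [Set.mem_inter_iff, Set.mem_setOf_eq, mem_sphere_zero_iff_norm, S18.cap]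
         constructor
         · rintro ⟨hle, ho⟩
           refine ⟨ho, ?_⟩
           have hexp : ‖z - o‖ ^ 2 = 2 - 2 * inner ℝ z o := by
             rw [@norm_sub_sq_real, hz, ho]
             ring
           rw [hexp] at hle
           linarith
         · rintro ⟨ho, hinner⟩
           refine ⟨?_, ho⟩
           have hexp : ‖z - o‖ ^ 2 = 2 - 2 * inner ℝ z o := by
             rw [@norm_sub_sq_real, hz, ho]
             ring
           rw [hexp]
           linarith
       have hdiff : μ ({o : EuclideanSpace ℝ (Fin (n + 1)) | ‖z - o‖ ^ 2 ≤ t} \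
           sphere (0 : EuclideanSpace ℝ (Fin (n + 1))) 1) = 0 :=
         measure_mono_null (fun o ho => ho.2) hμ.2.1
       have hsplit := measure_inter_add_diff (μ := μ)
         {o : EuclideanSpace ℝ (Fin (n + 1)) | ‖z - o‖ ^ 2 ≤ t}
         (isClosed_sphere.measurableSet :
           MeasurableSet (sphere (0 : EuclideanSpace ℝ (Fin (n + 1))) 1))
       rw [hdiff, add_zero, h1] at hsplit
       rw [← hsplit, S18.cap_reflect μ hμ.2.2 hz S18.norm_e0 (1 - t / 2),
         S18.cap_unique μ (S18.uniS (n + 1)) hμ (S18.uniS_isUniform (n + 1) (by omega))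
           S18.norm_e0 (1 - t / 2), S18.uniS_cap hs0]
     have hsec_fin : volume (S18.sector n (1 - t / 2)) ≠ ⊤ := by
       refine ne_top_of_le_ne_top (S18.ball_meas_ne_top (n + 1)) (measure_mono ?_)
       intro x hx
       exact mem_ball_zero_iff.2 hx.2
     have hmval : (μ {o : EuclideanSpace ℝ (Fin (n + 1)) | ‖z - o‖ ^ 2 ≤ t}).toReal =
         (volume (S18.sector n (1 - t / 2))).toReal / vd := by
       rw [hμcap, ENNReal.toReal_mul, ENNReal.toReal_inv]
       exact inv_mul_eq_div _ _
     have hT : 0 < t ^ (-((n : ℝ) / 2)) := Real.rpow_pos_of_pos ht0 _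
     have hgt : t ^ (-((n : ℝ) / 2)) * (Real.sqrt (1 - (1 - t / 2) ^ 2) / (1 - t / 2)) ^ n =
         (Real.sqrt (1 - t / 4) / (1 - t / 2)) ^ n := by
       have h1s : 1 - (1 - t / 2) ^ 2 = t * (1 - t / 4) := by ring
       have hcsplit : Real.sqrt (1 - (1 - t / 2) ^ 2) / (1 - t / 2) =
           Real.sqrt t * (Real.sqrt (1 - t / 4) / (1 - t / 2)) := by
         rw [h1s, Real.sqrt_mul ht0.le]
         ring
       have hsqpow : Real.sqrt t ^ n = t ^ ((n : ℝ) / 2) := by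
         rw [← Real.rpow_natCast (Real.sqrt t) n, Real.sqrt_eq_rpow,
           ← Real.rpow_mul ht0.le, mul_comm, mul_one_div]
       calc t ^ (-((n : ℝ) / 2)) * (Real.sqrt (1 - (1 - t / 2) ^ 2) / (1 - t / 2)) ^ n
           = (t ^ (-((n : ℝ) / 2)) * t ^ ((n : ℝ) / 2)) *
             (Real.sqrt (1 - t / 4) / (1 - t / 2)) ^ n := by
             rw [hcsplit, mul_pow, hsqpow]
             ring
         _ = (Real.sqrt (1 - t / 4) / (1 - t / 2)) ^ n := by
             rw [← Real.rpow_add ht0, neg_add_cancel, Real.rpow_zero, one_mul])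
  · -- lower bound
    have hv := S18.volume_coneK n (A := 1 - t / 2)
      (c := Real.sqrt (1 - (1 - t / 2) ^ 2) / (1 - t / 2)) hs0.le hc0
    have hmono := measure_mono (μ := (volume : Measure (EuclideanSpace ℝ (Fin (n+1))))) (S18.coneK_subset_sector (n := n) hs0 hs1)
    rw [hv] at hmono
    have hlo := ENNReal.toReal_mono hsec_fin hmono
    rw [ENNReal.toReal_mul, ENNReal.toReal_ofReal (by positivity)] at hlo
    rw [hmval, ← hgt]
    have h2 : t ^ (-((n : ℝ) / 2)) * (Real.sqrt (1 - (1 - t / 2) ^ 2) / (1 - t / 2)) ^ n *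
        ((1 - t / 2) ^ (n + 1) / ((n : ℝ) + 1)) * bn / vd =
        t ^ (-((n : ℝ) / 2)) *
          (((Real.sqrt (1 - (1 - t / 2) ^ 2) / (1 - t / 2)) ^ n *
            ((1 - t / 2) ^ (n + 1) / ((n : ℝ) + 1)) * bn) / vd) := by
      ring
    rw [h2]
    refine mul_le_mul_of_nonneg_left ?_ hT.le
    gcongr
  · -- upper bound
    have hv := S18.volume_coneK n (A := 1)
      (c := Real.sqrt (1 - (1 - t / 2) ^ 2) / (1 - t / 2)) zero_le_one hc0
    have hmono := measure_mono (μ := (volume : Measure (EuclideanSpace ℝ (Fin (n+1))))) (S18.sector_subset_coneK (n := n) hs0 hs1)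
    rw [hv] at hmono
    have hhi := ENNReal.toReal_mono
      (ENNReal.mul_ne_top ENNReal.ofReal_ne_top (S18.ball_meas_ne_top n)) hmono
    rw [ENNReal.toReal_mul, ENNReal.toReal_ofReal (by positivity), one_pow] at hhi
    rw [hmval, ← hgt]
    have h2 : t ^ (-((n : ℝ) / 2)) * (Real.sqrt (1 - (1 - t / 2) ^ 2) / (1 - t / 2)) ^ n *
        ((1 : ℝ) / ((n : ℝ) + 1)) * bn / vd =
        t ^ (-((n : ℝ) / 2)) *
          (((Real.sqrt (1 - (1 - t / 2) ^ 2) / (1 - t / 2)) ^ n *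
            ((1 : ℝ) / ((n : ℝ) + 1)) * bn) / vd) := by
      ring
    rw [h2]
    refine mul_le_mul_of_nonneg_left ?_ hT.le
    gcongr

end
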